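/- Assume CH and let T, U be normal countably closed ω₂-Aronszajn trees with levels of size ω₁. Let (A,f), (B,g) ∈ P(T,U) and γ < ξ with γ ∈ A, ξ ∈ B such that: A ⊆ ξ; the restrictions of (A,f) below γ and of (B,g) below ξ coincide; (A,f) is injective on γ and (B,g) is injective on ξ; every node of dom(f) of height γ is T-incomparable with every node of dom(g) of height ξ; and every node of ran(f) of height γ is U-incomparable with every node of ran(g) of height ξ. Then (A,f) and (B,g) are compatible in P(T,U). -/

import Mathlib

universe u v

/-- A set-theoretic tree: a strict partial order in which the set of predecessors
of any node is well-ordered. -/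
structure STree (α : Type u) where
  lt : α → α → Prop
  irrefl : ∀ x, ¬ lt x x
  trans : ∀ {x y z}, lt x y → lt y z → lt x z
  wo : ∀ x : α, IsWellOrder {y // lt y x} (fun a b => lt a.1 b.1)

namespace STree

variable {α β : Type u}

/-- The height of a node: the order type of its set of predecessors. -/
noncomputable def ht (T : STree α) (x : α) : Ordinal :=
  @Ordinal.type {y // T.lt y x} (fun a b => T.lt a.1 b.1) (T.wo x)

/-- The reflexive closure of the tree order. -/
def le (T : STree α) (x y : α) : Prop := T.lt x y ∨ x = y

/-- `T` is a `κ`-tree: height `κ` and all levels of size `< κ`. -/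
def IsKTree (T : STree α) (κ : Cardinal) : Prop :=
  (∀ x, T.ht x < κ.ord) ∧ (∀ γ < κ.ord, ∃ x, T.ht x = γ) ∧
    ∀ γ : Ordinal, Cardinal.mk {x // T.ht x = γ} < κ

/-- `T` is a normal `κ`-tree. -/
def IsNormalTree (T : STree α) (κ : Cardinal) : Prop :=
  (∀ x, ∀ γ, T.ht x < γ → γ < κ.ord → ∃ y, T.lt x y ∧ T.ht y = γ) ∧
  (∀ x y, x ≠ y → T.ht x = T.ht y → Order.IsSuccLimit (T.ht x) →
    ∃ z, T.lt z x ∧ ¬ T.lt z y) ∧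
  (∀ x, ∃ y z, T.lt x y ∧ T.lt x z ∧ ¬ T.le y z ∧ ¬ T.le z y)

/-- A chain in `T`: a linearly ordered subset. -/
def IsChain (T : STree α) (b : Set α) : Prop :=
  ∀ x ∈ b, ∀ y ∈ b, T.le x y ∨ T.le y x

/-- `T` is countably closed: every countable chain has an upper bound. -/
def CClosed (T : STree α) : Prop :=
  ∀ b : Set α, b.Countable → T.IsChain b → ∃ z, ∀ x ∈ b, T.le x z

/-- `T` is a `κ`-Aronszajn tree: a `κ`-tree with no cofinal chain. -/
def Aronszajn (T : STree α) (κ : Cardinal) : Prop :=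
  T.IsKTree κ ∧ ¬ ∃ b : Set α, T.IsChain b ∧ ∀ γ < κ.ord, ∃ x ∈ b, T.ht x = γ

end STree

/-- The continuum hypothesis. -/
def CH : Prop := (2 : Cardinal.{0}) ^ Cardinal.aleph0 = Cardinal.aleph 1

/-- A pair `(A, F)` as in the forcing `ℙ(T,U)`: a set of ordinals together with the
graph of a partial function from `T` to `U`. -/
structure PPair (α β : Type u) where
  A : Set Ordinal.{v}
  F : Set (α × β)

/-- Ordinals below `ω₂` of cofinality `ω₁`. -/
def cofW1 : Set Ordinal :=
  {γ | γ < (Cardinal.aleph 2).ord ∧ Ordinal.cof γ = Cardinal.aleph 1}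

/-- The domain of a graph. -/
def dom' {α β : Type u} (F : Set (α × β)) : Set α := {x | ∃ y, (x, y) ∈ F}

/-- `p = (A, F)` is a condition in the forcing poset `ℙ(T,U)`. -/
def IsCond {α β : Type u} (T : STree α) (U : STree β) (p : PPair α β) : Prop :=
  p.A.Countable ∧ p.A ⊆ cofW1 ∧
  (∀ q ∈ p.F, ∀ r ∈ p.F, q.1 = r.1 → q.2 = r.2) ∧
  (∀ q ∈ p.F, ∀ r ∈ p.F, q.2 = r.2 → q.1 = r.1) ∧
  (dom' p.F).Countable ∧
  (∀ q ∈ p.F, T.ht q.1 ∈ p.A) ∧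
  (∀ q ∈ p.F, ∀ z : α, T.lt z q.1 → T.ht z ∈ p.A → z ∈ dom' p.F) ∧
  (∀ q ∈ p.F, ∀ b ∈ p.A, T.ht q.1 < b → ∃ r ∈ p.F, T.ht r.1 = b ∧ T.lt q.1 r.1) ∧
  (∀ q ∈ p.F, U.ht q.2 = T.ht q.1) ∧
  (∀ q ∈ p.F, ∀ r ∈ p.F, T.lt q.1 r.1 → U.lt q.2 r.2)

/-- The order on `ℙ(T,U)`: `p ≤ q` iff `p` extends `q` in both coordinates. -/
def CondLe {α β : Type u} (p q : PPair α β) : Prop := q.A ⊆ p.A ∧ q.F ⊆ p.F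

/-- A normal countably closed `ω₂`-Aronszajn tree all of whose levels have size `ω₁`. -/
def NiceTree {α : Type u} (T : STree α) : Prop :=
  T.IsKTree (Cardinal.aleph 2) ∧ T.IsNormalTree (Cardinal.aleph 2) ∧
    T.CClosed ∧ T.Aronszajn (Cardinal.aleph 2) ∧
    ∀ γ < (Cardinal.aleph 2).ord, Cardinal.mk {x // T.ht x = γ} = Cardinal.aleph 1

/-- `p` is injective on level `b`: distinct nodes of `dom f_p` of height `b` are
separated by their projections to some level in `A_p ∩ b`. -/
def InjOn' {α β : Type u} (T : STree α) (p : PPair α β) (b : Ordinal) : Prop :=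
  ∀ q ∈ p.F, ∀ r ∈ p.F, T.ht q.1 = b → T.ht r.1 = b → q.1 ≠ r.1 →
    ∃ γ ∈ p.A, γ < b ∧
      ∀ z w : α, T.le z q.1 → T.ht z = γ → T.le w r.1 → T.ht w = γ → z ≠ w

/-- The restriction `p ↾ γ` of a condition to levels below `γ`. -/
def restrC {α β : Type u} (T : STree α) (p : PPair α β) (γ : Ordinal) : PPair α β :=
  ⟨p.A ∩ Set.Iio γ, {r ∈ p.F | T.ht r.1 < γ}⟩

namespace STree

variable {α : Type u} {β : Type u}

section basic
variable (T : STree α)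

theorem le_rfl {x : α} : T.le x x := Or.inr rfl

theorem le_trans {x y z : α} (h : T.le x y) (h' : T.le y z) : T.le x z := by
  rcases h with h | rfl
  · rcases h' with h' | rfl
    · exact Or.inl (T.trans h h')
    · exact Or.inl h
  · exact h'

theorem lt_of_lt_of_le {x y z : α} (h : T.lt x y) (h' : T.le y z) : T.lt x z := by
  rcases h' with h' | rfl
  · exact T.trans h h'
  · exact h

theorem lt_of_le_of_lt {x y z : α} (h : T.le x y) (h' : T.lt y z) : T.lt x z := by
  rcases h with h | rfl
  · exact T.trans h h'
  · exact h'

/-- The predecessor relation below `z`. -/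
private def prel (z : α) : {y // T.lt y z} → {y // T.lt y z} → Prop :=
  fun a b => T.lt a.1 b.1

theorem ht_def (z : α) : T.ht z = @Ordinal.type _ (T.prel z) (T.wo z) := rfl

theorem ht_eq_typein {x z : α} (h : T.lt x z) :
    T.ht x = @Ordinal.typein _ (T.prel z) (T.wo z) ⟨x, h⟩ := by
  haveI : IsWellOrder _ (T.prel z) := T.wo z
  haveI : IsWellOrder _ (T.prel x) := T.wo x
  rw [← Ordinal.type_subrel (T.prel z), ht_def]
  refine Ordinal.type_eq.2 ⟨RelIso.mk (Equiv.mk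
    (fun y => ⟨⟨y.1, T.trans y.2 h⟩, y.2⟩) (fun y => ⟨y.1.1, y.2⟩)
    (fun y => rfl) (fun y => rfl)) (fun {a b} => Iff.rfl)⟩

theorem ht_lt_ht_of_lt {x z : α} (h : T.lt x z) : T.ht x < T.ht z := by
  haveI : IsWellOrder _ (T.prel z) := T.wo z
  rw [ht_eq_typein T h, ht_def]
  exact Ordinal.typein_lt_type _ _

theorem ht_lt_ht_iff {x y z : α} (hx : T.lt x z) (hy : T.lt y z) :
    T.ht x < T.ht y ↔ T.lt x y := by
  haveI : IsWellOrder _ (T.prel z) := T.wo z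
  rw [ht_eq_typein T hx, ht_eq_typein T hy]
  exact Ordinal.typein_lt_typein _

theorem pred_eq_of_ht_eq {x y z : α} (hx : T.lt x z) (hy : T.lt y z)
    (h : T.ht x = T.ht y) : x = y := by
  haveI : IsWellOrder _ (T.prel z) := T.wo z
  have h2 : (⟨x, hx⟩ : {y // T.lt y z}) = ⟨y, hy⟩ := by
    apply Ordinal.typein_injective (T.prel z)
    rw [← ht_eq_typein T hx, ← ht_eq_typein T hy]; exact h
  exact congrArg Subtype.val h2

theorem exists_pred {z : α} {δ : Ordinal} (h : δ < T.ht z) :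
    ∃ y, T.lt y z ∧ T.ht y = δ := by
  haveI : IsWellOrder _ (T.prel z) := T.wo z
  rw [ht_def] at h
  obtain ⟨a, ha⟩ := Ordinal.typein_surj (T.prel z) h
  exact ⟨a.1, a.2, by rw [ht_eq_typein T a.2]; exact ha⟩

end basic

end STree

namespace STree
section proj
variable (T : STree α)

theorem ht_le_of_le {x z : α} (h : T.le x z) : T.ht x ≤ T.ht z := by
  rcases h with h | rfl
  · exact (T.ht_lt_ht_of_lt h).le
  · exact le_refl _

theorem lt_trich {x y z : α} (hx : T.lt x z) (hy : T.lt y z) :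
    T.lt x y ∨ x = y ∨ T.lt y x := by
  haveI : IsWellOrder _ (T.prel z) := T.wo z
  rcases @trichotomous _ (T.prel z) _ ⟨x, hx⟩ ⟨y, hy⟩ with h | h | h
  · exact Or.inl h
  · exact Or.inr (Or.inl (congrArg Subtype.val h))
  · exact Or.inr (Or.inr h)

theorem lt_of_le_of_ht_lt {x y z : α} (hx : T.le x z) (hy : T.le y z)
    (h : T.ht x < T.ht y) : T.lt x y := by
  rcases hy with hy | rfl
  · rcases hx with hx | rfl
    · rcases T.lt_trich hx hy with h' | rfl | h'
      · exact h'
      · exact absurd h (lt_irrefl _)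
      · exact absurd (h.trans (T.ht_lt_ht_of_lt h')) (lt_irrefl _)
    · exact absurd (h.trans (T.ht_lt_ht_of_lt hy)) (lt_irrefl _)
  · rcases hx with hx | rfl
    · exact hx
    · exact absurd h (lt_irrefl _)

theorem eq_of_le_of_ht_eq {x y z : α} (hx : T.le x z) (hy : T.le y z)
    (h : T.ht x = T.ht y) : x = y := by
  rcases hx with hx | rfl
  · rcases hy with hy | rfl
    · exact T.pred_eq_of_ht_eq hx hy h
    · exact absurd (h ▸ T.ht_lt_ht_of_lt hx) (lt_irrefl _)
  · rcases hy with hy | rfl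
    · exact absurd (h ▸ T.ht_lt_ht_of_lt hy) (by simp)
    · rfl

noncomputable def proj (z : α) (δ : Ordinal) : α :=
  if h : δ < T.ht z then (T.exists_pred h).choose else z

theorem proj_lt {z : α} {δ : Ordinal} (h : δ < T.ht z) : T.lt (T.proj z δ) z := by
  rw [proj, dif_pos h]; exact (T.exists_pred h).choose_spec.1

theorem proj_ht {z : α} {δ : Ordinal} (h : δ ≤ T.ht z) : T.ht (T.proj z δ) = δ := by
  rcases lt_or_eq_of_le h with h' | h'
  · rw [proj, dif_pos h']; exact (T.exists_pred h').choose_spec.2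
  · rw [proj, dif_neg (by rw [← h']; exact lt_irrefl _), h']

theorem proj_le {z : α} {δ : Ordinal} (h : δ ≤ T.ht z) : T.le (T.proj z δ) z := by
  rcases lt_or_eq_of_le h with h' | h'
  · exact Or.inl (T.proj_lt h')
  · rw [proj, dif_neg (by rw [← h']; exact lt_irrefl _)]; exact Or.inr rfl

theorem proj_eq_of {x z : α} {δ : Ordinal} (hle : T.le x z) (hht : T.ht x = δ) :
    T.proj z δ = x := by
  have hd : δ ≤ T.ht z := hht ▸ T.ht_le_of_le hle
  exact T.eq_of_le_of_ht_eq (T.proj_le hd) hle ((T.proj_ht hd).trans hht.symm)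

theorem proj_self {z : α} : T.proj z (T.ht z) = z := T.proj_eq_of T.le_rfl rfl

theorem lt_proj {x z : α} {δ : Ordinal} (hle : T.le x z) (h1 : T.ht x < δ)
    (h2 : δ ≤ T.ht z) : T.lt x (T.proj z δ) :=
  T.lt_of_le_of_ht_lt hle (T.proj_le h2) (by rw [T.proj_ht h2]; exact h1)

theorem le_proj {x z : α} {δ : Ordinal} (hle : T.le x z) (h1 : T.ht x ≤ δ)
    (h2 : δ ≤ T.ht z) : T.le x (T.proj z δ) := by
  rcases lt_or_eq_of_le h1 with h' | h'
  · exact Or.inl (T.lt_proj hle h' h2)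
  · have : T.proj z δ = x := T.proj_eq_of hle h'
    rw [this]; exact T.le_rfl

theorem proj_proj {z : α} {δ δ' : Ordinal} (h1 : δ ≤ δ') (h2 : δ' ≤ T.ht z) :
    T.proj (T.proj z δ') δ = T.proj z δ := by
  have hp : T.ht (T.proj z δ') = δ' := T.proj_ht h2
  have h1' : δ ≤ T.ht (T.proj z δ') := by rw [hp]; exact h1
  have : T.le (T.proj (T.proj z δ') δ) z :=
    T.le_trans (T.proj_le h1') (T.proj_le h2)
  exact (T.proj_eq_of this (T.proj_ht h1')).symm

theorem proj_lt_proj {z : α} {δ δ' : Ordinal} (h1 : δ < δ') (h2 : δ' ≤ T.ht z) :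
    T.lt (T.proj z δ) (T.proj z δ') := by
  have := T.lt_proj (x := T.proj z δ) (T.proj_le (h1.le.trans h2))
    (by rw [T.proj_ht (h1.le.trans h2)]; exact h1) h2
  exact this

theorem proj_le_proj {z : α} {δ δ' : Ordinal} (h1 : δ ≤ δ') (h2 : δ' ≤ T.ht z) :
    T.le (T.proj z δ) (T.proj z δ') :=
  T.le_proj (T.proj_le (h1.trans h2)) (by rw [T.proj_ht (h1.trans h2)]; exact h1) h2

end proj
end STree

/-- All conditions of `IsCond` except the upward-extension clause. -/
structure Pre {α β : Type u} (T : STree α) (U : STree β) (A : Set Ordinal)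
    (W : Set (α × β)) : Prop where
  cA : A.Countable
  cof : A ⊆ cofW1
  fn : ∀ q ∈ W, ∀ r ∈ W, q.1 = r.1 → q.2 = r.2
  cofn : ∀ q ∈ W, ∀ r ∈ W, q.2 = r.2 → q.1 = r.1
  cdom : (dom' W).Countable
  htmem : ∀ q ∈ W, T.ht q.1 ∈ A
  dcl : ∀ q ∈ W, ∀ z : α, T.lt z q.1 → T.ht z ∈ A → z ∈ dom' W
  htEq : ∀ q ∈ W, U.ht q.2 = T.ht q.1
  mono : ∀ q ∈ W, ∀ r ∈ W, T.lt q.1 r.1 → U.lt q.2 r.2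

namespace Pre

variable {α β : Type u} {T : STree α} {U : STree β} {A : Set Ordinal} {W : Set (α × β)}

theorem pair_eq (h : Pre T U A W) {q r : α × β} (hq : q ∈ W) (hr : r ∈ W)
    (h1 : q.1 = r.1) : q = r :=
  Prod.ext h1 (h.fn q hq r hr h1)

theorem pair_eq' (h : Pre T U A W) {q r : α × β} (hq : q ∈ W) (hr : r ∈ W)
    (h1 : q.2 = r.2) : q = r :=
  Prod.ext (h.cofn q hq r hr h1) h1

theorem cW (h : Pre T U A W) : W.Countable := by
  haveI : Countable (dom' W) := Set.countable_coe_iff.2 h.cdom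
  rw [← Set.countable_coe_iff]
  have hf : Function.Injective (fun x : W => (⟨x.1.1, ⟨x.1.2, x.2⟩⟩ : dom' W)) := by
    intro x y hxy
    have h1 : x.1.1 = y.1.1 := congrArg Subtype.val hxy
    exact Subtype.ext (h.pair_eq x.2 y.2 h1)
  exact hf.countable

theorem pairMem (h : Pre T U A W) {q : α × β} (hq : q ∈ W) {δ : Ordinal}
    (hδ : δ ∈ A) (hle : δ ≤ T.ht q.1) : (T.proj q.1 δ, U.proj q.2 δ) ∈ W := by
  rcases lt_or_eq_of_le hle with hlt | heq
  · obtain ⟨y, hy⟩ := h.dcl q hq (T.proj q.1 δ) (T.proj_lt hlt) (by rw [T.proj_ht hle]; exact hδ)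
    have h2 : U.lt y q.2 := h.mono _ hy q hq (T.proj_lt hlt)
    have h3 : U.ht y = δ := by
      have := h.htEq _ hy
      simpa [T.proj_ht hle] using this
    have h4 : U.proj q.2 δ = y := U.proj_eq_of (Or.inl h2) h3
    rw [h4]
    exact hy
  · have e1 : T.proj q.1 δ = q.1 := by rw [heq, T.proj_self]
    have e2 : U.proj q.2 δ = q.2 := by
      have : δ = U.ht q.2 := by rw [h.htEq q hq]; exact heq
      rw [this, U.proj_self]
    rw [e1, e2]
    exact hq

theorem convMono (h : Pre T U A W) {q r : α × β} (hq : q ∈ W) (hr : r ∈ W)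
    (hlt : U.lt q.2 r.2) : T.lt q.1 r.1 := by
  have hht : T.ht q.1 < T.ht r.1 := by
    rw [← h.htEq q hq, ← h.htEq r hr]; exact U.ht_lt_ht_of_lt hlt
  have hs := h.pairMem hr (h.htmem q hq) hht.le
  have h2 : U.proj r.2 (T.ht q.1) = q.2 :=
    U.proj_eq_of (Or.inl hlt) (h.htEq q hq)
  rw [h2] at hs
  have h3 := h.cofn _ hs q hq rfl
  rw [← h3]
  exact T.proj_lt hht

end Pre

section Extend

variable {α β : Type u}

/-- Comparability relation on pairs of a partial isomorphism. -/
def CRel (T : STree α) (W : Set (α × β)) : (α × β) → (α × β) → Prop :=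
  fun a b => a ∈ W ∧ b ∈ W ∧ T.lt a.1 b.1

/-- The set of levels met by a set of pairs. -/
def lvl (T : STree α) (M : Set (α × β)) : Set Ordinal := {o | ∃ m ∈ M, T.ht m.1 = o}

/-- `zz` is a good pair of bounds for the maximal chain `M`. -/
structure GoodB (T : STree α) (U : STree β) (A : Set Ordinal) (W : Set (α × β))
    (M : Set (α × β)) (zz : α × β) : Prop where
  max : IsMaxChain (CRel T W) M
  sub : M ⊆ W
  hA : ∀ δ ∈ A, δ < T.ht zz.1 ∧ δ < U.ht zz.2
  ub : ∀ m ∈ M, T.lt m.1 zz.1 ∧ U.lt m.2 zz.2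

variable {T : STree α} {U : STree β} {A : Set Ordinal} {W : Set (α × β)}
  {M M' : Set (α × β)} {zz zz' : α × β}

theorem GoodB.k3a (hG : GoodB T U A W M zz) {m : α × β} (hm : m ∈ M) :
    T.proj zz.1 (T.ht m.1) = m.1 :=
  T.proj_eq_of (Or.inl (hG.ub m hm).1) rfl

theorem GoodB.k3b (hG : GoodB T U A W M zz) {m : α × β} (hm : m ∈ M) :
    U.proj zz.2 (U.ht m.2) = m.2 :=
  U.proj_eq_of (Or.inl (hG.ub m hm).2) rfl

theorem GoodB.k1 (h : Pre T U A W) (hG : GoodB T U A W M zz) {δ : Ordinal}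
    (hδA : δ ∈ A) (hl : δ ∉ lvl T M) {x : α × β} (hx : x ∈ W) :
    x.1 ≠ T.proj zz.1 δ := by
  intro he
  have hδ : δ < T.ht zz.1 := (hG.hA δ hδA).1
  have hhx : T.ht x.1 = δ := by rw [he]; exact T.proj_ht hδ.le
  have hxlt : T.lt x.1 zz.1 := by rw [he]; exact T.proj_lt hδ
  have hch : IsChain (CRel T W) (insert x M) := by
    refine hG.max.1.insert fun m hm hne => ?_
    have hmlt : T.lt m.1 zz.1 := (hG.ub m hm).1
    rcases T.lt_trich hxlt hmlt with h' | h' | h'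
    · exact Or.inl ⟨hx, hG.sub hm, h'⟩
    · exact absurd (h.pair_eq hx (hG.sub hm) h') hne
    · exact Or.inr ⟨hG.sub hm, hx, h'⟩
  have := hG.max.2 hch (Set.subset_insert x M)
  have hxM : x ∈ M := this ▸ Set.mem_insert x M
  exact hl ⟨x, hxM, hhx⟩

theorem GoodB.k2 (h : Pre T U A W) (hG : GoodB T U A W M zz) {δ : Ordinal}
    (hδA : δ ∈ A) (hl : δ ∉ lvl T M) {x : α × β} (hx : x ∈ W) :
    x.2 ≠ U.proj zz.2 δ := by
  intro he
  have hδ : δ < U.ht zz.2 := (hG.hA δ hδA).2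
  have hhx2 : U.ht x.2 = δ := by rw [he]; exact U.proj_ht hδ.le
  have hhx : T.ht x.1 = δ := by rw [← h.htEq x hx]; exact hhx2
  have hxlt : U.lt x.2 zz.2 := by rw [he]; exact U.proj_lt hδ
  have hch : IsChain (CRel T W) (insert x M) := by
    refine hG.max.1.insert fun m hm hne => ?_
    have hmlt : U.lt m.2 zz.2 := (hG.ub m hm).2
    rcases U.lt_trich hxlt hmlt with h' | h' | h'
    · exact Or.inl ⟨hx, hG.sub hm, h.convMono hx (hG.sub hm) h'⟩
    · exact absurd (h.pair_eq' hx (hG.sub hm) h') hne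
    · exact Or.inr ⟨hG.sub hm, hx, h.convMono (hG.sub hm) hx h'⟩
  have := hG.max.2 hch (Set.subset_insert x M)
  have hxM : x ∈ M := this ▸ Set.mem_insert x M
  exact hl ⟨x, hxM, hhx⟩

/-- If two good systems share a node at a new level, their chains coincide. -/
theorem GoodB.cross (h : Pre T U A W) (hG : GoodB T U A W M zz)
    (hG' : GoodB T U A W M' zz') {δ : Ordinal} (hδA : δ ∈ A)
    (hl : δ ∉ lvl T M) (hl' : δ ∉ lvl T M')
    (he : T.proj zz.1 δ = T.proj zz'.1 δ) : M = M' := by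
  have hδ : δ < T.ht zz.1 := (hG.hA δ hδA).1
  have hδ' : δ < T.ht zz'.1 := (hG'.hA δ hδA).1
  -- all levels of M and M' lie below δ
  have low : ∀ (N₁ N₂ : Set (α × β)) (w₁ w₂ : α × β), GoodB T U A W N₁ w₁ →
      GoodB T U A W N₂ w₂ → δ ∉ lvl T N₂ → δ < T.ht w₁.1 →
      T.proj w₁.1 δ = T.proj w₂.1 δ → ∀ m ∈ N₁, T.ht m.1 < δ := by
    intro N₁ N₂ w₁ w₂ g1 g2 l2 hd12 he12 m hm
    by_contra hge
    push_neg at hge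
    have hmle : T.le m.1 w₁.1 := Or.inl (g1.ub m hm).1
    have hp : T.proj m.1 δ = T.proj w₁.1 δ := by
      have := T.proj_proj (z := w₁.1) (δ := δ) (δ' := T.ht m.1) hge (T.ht_le_of_le hmle)
      rw [g1.k3a hm] at this
      exact this
    rcases lt_or_eq_of_le hge with hgt | heq2
    · have hdom : T.proj m.1 δ ∈ dom' W :=
        h.dcl m (g1.sub hm) _ (T.proj_lt hgt) (by rw [T.proj_ht hgt.le]; exact hδA)
      obtain ⟨y, hy⟩ := hdom
      exact g2.k1 h hδA l2 hy (by simpa [hp, he12] using rfl)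
    · refine g2.k1 h hδA l2 (g1.sub hm) ?_
      have : m.1 = T.proj w₁.1 δ := by rw [heq2]; exact (g1.k3a hm).symm
      rw [this, he12]
  have lowM : ∀ m ∈ M, T.ht m.1 < δ := low M M' zz zz' hG hG' hl' hδ he
  have lowM' : ∀ m ∈ M', T.ht m.1 < δ := low M' M zz' zz hG' hG hl hδ' he.symm
  have hlt : ∀ m ∈ M, T.lt m.1 (T.proj zz.1 δ) := fun m hm =>
    T.lt_proj (Or.inl (hG.ub m hm).1) (lowM m hm) hδ.le
  have hlt' : ∀ m ∈ M', T.lt m.1 (T.proj zz.1 δ) := fun m hm => by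
    rw [he]; exact T.lt_proj (Or.inl (hG'.ub m hm).1) (lowM' m hm) hδ'.le
  have hch : IsChain (CRel T W) (M ∪ M') := by
    intro a ha b hb hne
    have hla : T.lt a.1 (T.proj zz.1 δ) := by
      rcases ha with ha | ha
      exacts [hlt a ha, hlt' a ha]
    have hlb : T.lt b.1 (T.proj zz.1 δ) := by
      rcases hb with hb | hb
      exacts [hlt b hb, hlt' b hb]
    have haW : a ∈ W := by rcases ha with ha | ha; exacts [hG.sub ha, hG'.sub ha]
    have hbW : b ∈ W := by rcases hb with hb | hb; exacts [hG.sub hb, hG'.sub hb]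
    rcases T.lt_trich hla hlb with h' | h' | h'
    · exact Or.inl ⟨haW, hbW, h'⟩
    · exact absurd (h.pair_eq haW hbW h') hne
    · exact Or.inr ⟨hbW, haW, h'⟩
  have e1 := hG.max.2 hch Set.subset_union_left
  have e2 := hG'.max.2 hch Set.subset_union_right
  rw [← e1] at e2
  exact e2.symm


/-- Image-side version of `cross`. -/
theorem GoodB.crossImg (h : Pre T U A W) (hG : GoodB T U A W M zz)
    (hG' : GoodB T U A W M' zz') {δ : Ordinal} (hδA : δ ∈ A)
    (hl : δ ∉ lvl T M) (hl' : δ ∉ lvl T M')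
    (he : U.proj zz.2 δ = U.proj zz'.2 δ) : M = M' := by
  have hδ : δ < U.ht zz.2 := (hG.hA δ hδA).2
  have hδ' : δ < U.ht zz'.2 := (hG'.hA δ hδA).2
  have low : ∀ (N₁ N₂ : Set (α × β)) (w₁ w₂ : α × β), GoodB T U A W N₁ w₁ →
      GoodB T U A W N₂ w₂ → δ ∉ lvl T N₂ →
      U.proj w₁.2 δ = U.proj w₂.2 δ → ∀ m ∈ N₁, T.ht m.1 < δ := by
    intro N₁ N₂ w₁ w₂ g1 g2 l2 he12 m hm
    by_contra hge
    push_neg at hge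
    have hge2 : δ ≤ U.ht m.2 := by rw [h.htEq m (g1.sub hm)]; exact hge
    have hmle : U.le m.2 w₁.2 := Or.inl (g1.ub m hm).2
    have hp : U.proj m.2 δ = U.proj w₁.2 δ := by
      have h2 := U.proj_proj (z := w₁.2) (δ := δ) (δ' := U.ht m.2) hge2 (U.ht_le_of_le hmle)
      rw [g1.k3b hm] at h2
      exact h2
    have hP := h.pairMem (g1.sub hm) hδA hge
    exact g2.k2 h hδA l2 hP (by simp only []; rw [hp, he12])
  have lowM : ∀ m ∈ M, T.ht m.1 < δ := low M M' zz zz' hG hG' hl' he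
  have lowM' : ∀ m ∈ M', T.ht m.1 < δ := low M' M zz' zz hG' hG hl he.symm
  have hlt : ∀ m ∈ M, U.lt m.2 (U.proj zz.2 δ) := fun m hm =>
    U.lt_proj (Or.inl (hG.ub m hm).2)
      (by rw [h.htEq m (hG.sub hm)]; exact lowM m hm) hδ.le
  have hlt' : ∀ m ∈ M', U.lt m.2 (U.proj zz.2 δ) := fun m hm => by
    rw [he]
    exact U.lt_proj (Or.inl (hG'.ub m hm).2)
      (by rw [h.htEq m (hG'.sub hm)]; exact lowM' m hm) hδ'.le
  have hch : IsChain (CRel T W) (M ∪ M') := by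
    intro a ha b hb hne
    have hla : U.lt a.2 (U.proj zz.2 δ) := by
      rcases ha with ha | ha
      exacts [hlt a ha, hlt' a ha]
    have hlb : U.lt b.2 (U.proj zz.2 δ) := by
      rcases hb with hb | hb
      exacts [hlt b hb, hlt' b hb]
    have haW : a ∈ W := by rcases ha with ha | ha; exacts [hG.sub ha, hG'.sub ha]
    have hbW : b ∈ W := by rcases hb with hb | hb; exacts [hG.sub hb, hG'.sub hb]
    rcases U.lt_trich hla hlb with h' | h' | h'
    · exact Or.inl ⟨haW, hbW, h.convMono haW hbW h'⟩
    · exact absurd (h.pair_eq' haW hbW h') hne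
    · exact Or.inr ⟨hbW, haW, h.convMono hbW haW h'⟩
  have e1 := hG.max.2 hch Set.subset_union_left
  have e2 := hG'.max.2 hch Set.subset_union_right
  rw [← e1] at e2
  exact e2.symm

end Extend

section ExistGood

variable {α β : Type u}

theorem exists_bound {S : Set Ordinal} (hc : S.Countable) (hne : S.Nonempty)
    (hS : ∀ x ∈ S, x < (Cardinal.aleph 2).ord) :
    ∃ σ, σ < (Cardinal.aleph 2).ord ∧ ∀ x ∈ S, x < σ := by
  obtain ⟨f, hf⟩ := hc.exists_eq_range hne
  have hreg : Cardinal.IsRegular (Cardinal.aleph 2) := by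
    have : (2 : Ordinal) = Order.succ 1 := by
      rw [Ordinal.succ_one]
    rw [this]
    exact Cardinal.isRegular_aleph_succ 1
  have hlim : Order.IsSuccLimit (Cardinal.aleph 2).ord :=
    Cardinal.isSuccLimit_ord (Cardinal.aleph0_le_aleph 2)
  have h1 : iSup f < (Cardinal.aleph 2).ord := by
    refine Cardinal.iSup_lt_ord_lift_of_isRegular hreg ?_ ?_
    · simpa using Cardinal.aleph0_lt_aleph_one.trans_le
        (Cardinal.aleph_le_aleph.2 one_le_two)
    · intro n
      exact hS _ (hf ▸ Set.mem_range_self n)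
  refine ⟨Order.succ (iSup f), hlim.succ_lt h1, fun x hx => ?_⟩
  rw [hf] at hx
  obtain ⟨n, rfl⟩ := hx
  exact (Ordinal.le_iSup f n).trans_lt (Order.lt_succ _)

variable {T : STree α} {U : STree β} {A : Set Ordinal} {W : Set (α × β)}

theorem exists_goodB (hT : NiceTree T) (hU : NiceTree U) (h : Pre T U A W)
    (M : Set (α × β)) (hmax : IsMaxChain (CRel T W) M) (hsub : M ⊆ W) :
    ∃ zz, GoodB T U A W M zz := by
  have hMc : M.Countable := h.cW.mono hsub
  have hch1 : T.IsChain (Prod.fst '' M) := by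
    rintro x ⟨m, hm, rfl⟩ y ⟨m', hm', rfl⟩
    by_cases he : m = m'
    · subst he; exact Or.inl T.le_rfl
    · rcases hmax.1 hm hm' he with h' | h'
      · exact Or.inl (Or.inl h'.2.2)
      · exact Or.inr (Or.inl h'.2.2)
  have hch2 : U.IsChain (Prod.snd '' M) := by
    rintro x ⟨m, hm, rfl⟩ y ⟨m', hm', rfl⟩
    by_cases he : m = m'
    · subst he; exact Or.inl U.le_rfl
    · rcases hmax.1 hm hm' he with h' | h'
      · exact Or.inl (Or.inl (h.mono m (hsub hm) m' (hsub hm') h'.2.2))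
      · exact Or.inr (Or.inl (h.mono m' (hsub hm') m (hsub hm) h'.2.2))
  obtain ⟨u, hu⟩ := hT.2.2.1 _ (hMc.image Prod.fst) hch1
  obtain ⟨v, hv⟩ := hU.2.2.1 _ (hMc.image Prod.snd) hch2
  obtain ⟨σ, hσ2, hσ⟩ := exists_bound (S := A ∪ {T.ht u, U.ht v})
    (h.cA.union ((Set.countable_singleton _).insert _))
    ⟨T.ht u, Or.inr (Or.inl rfl)⟩
    (by
      rintro x (hx | hx | hx)
      · exact (h.cof hx).1
      · rw [hx]; exact hT.1.1 u
      · rw [Set.mem_singleton_iff.1 hx]; exact hU.1.1 v)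
  obtain ⟨z, hz1, hz2⟩ := hT.2.1.1 u σ (hσ _ (Or.inr (Or.inl rfl))) hσ2
  obtain ⟨z', hz1', hz2'⟩ := hU.2.1.1 v σ (hσ _ (Or.inr (Or.inr rfl))) hσ2
  refine ⟨(z, z'), hmax, hsub, ?_, ?_⟩
  · intro δ hδ
    constructor
    · simp only []; rw [hz2]; exact hσ _ (Or.inl hδ)
    · simp only []; rw [hz2']; exact hσ _ (Or.inl hδ)
  · intro m hm
    constructor
    · exact T.lt_of_le_of_lt (hu _ ⟨m, hm, rfl⟩) hz1
    · exact U.lt_of_le_of_lt (hv _ ⟨m, hm, rfl⟩) hz1'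
end ExistGood

section ExtendMain

variable {α β : Type u} {T : STree α} {U : STree β}

theorem pre_extend (hT : NiceTree T) (hU : NiceTree U) {A : Set Ordinal}
    {W : Set (α × β)} (h : Pre T U A W) :
    ∃ W', W ⊆ W' ∧ IsCond T U ⟨A, W'⟩ := by
  classical
  -- a maximal chain through each element
  have exM : ∀ r : α × β, ∃ M, r ∈ W → (IsMaxChain (CRel T W) M ∧ r ∈ M) := by
    intro r
    obtain ⟨M, hM, hsub⟩ := (Set.subsingleton_singleton (a := r)).isChain
      (r := CRel T W) |>.exists_maxChain
    exact ⟨M, fun _ => ⟨hM, hsub rfl⟩⟩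
  choose MC hMC using exM
  have sub : ∀ r ∈ W, MC r ⊆ W := by
    intro r hr m hm
    by_cases he : m = r
    · rwa [he]
    · rcases (hMC r hr).1.1 hm (hMC r hr).2 he with h' | h'
      · exact h'.1
      · exact h'.2.1
  have exZ : ∀ M : Set (α × β), ∃ zz,
      IsMaxChain (CRel T W) M → M ⊆ W → GoodB T U A W M zz := by
    intro M
    by_cases hM : IsMaxChain (CRel T W) M ∧ M ⊆ W
    · obtain ⟨zz, hzz⟩ := exists_goodB hT hU h M hM.1 hM.2
      exact ⟨zz, fun _ _ => hzz⟩
    · obtain ⟨x0, _⟩ := hT.1.2.1 0 (Cardinal.isSuccLimit_ord (Cardinal.aleph0_le_aleph 2)).pos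
      obtain ⟨y0, _⟩ := hU.1.2.1 0 (Cardinal.isSuccLimit_ord (Cardinal.aleph0_le_aleph 2)).pos
      exact ⟨(x0, y0), fun h1 h2 => absurd ⟨h1, h2⟩ hM⟩
  choose Z hZ using exZ
  have good : ∀ r ∈ W, GoodB T U A W (MC r) (Z (MC r)) := fun r hr =>
    hZ _ (hMC r hr).1 (sub r hr)
  set N : Set (α × β) := {x | ∃ r ∈ W, ∃ δ ∈ A, δ ∉ lvl T (MC r) ∧
    x = (T.proj (Z (MC r)).1 δ, U.proj (Z (MC r)).2 δ)} with hNdef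
  have hmemN : ∀ {x : α × β}, x ∈ N → ∃ r ∈ W, ∃ δ ∈ A, δ ∉ lvl T (MC r) ∧
      x = (T.proj (Z (MC r)).1 δ, U.proj (Z (MC r)).2 δ) := fun hx => hx
  refine ⟨W ∪ N, Set.subset_union_left, h.cA, h.cof, ?_, ?_, ?_, ?_, ?_, ?_, ?_, ?_⟩
  · -- functional
    rintro x hx y hy he
    rcases hx with hx | hx
    · rcases hy with hy | hy
      · exact h.fn x hx y hy he
      · obtain ⟨r, hr, δ, hδ, hl, rfl⟩ := hmemN hy
        exact absurd he ((good r hr).k1 h hδ hl hx)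
    · obtain ⟨r, hr, δ, hδ, hl, rfl⟩ := hmemN hx
      rcases hy with hy | hy
      · exact absurd he.symm ((good r hr).k1 h hδ hl hy)
      · obtain ⟨r', hr', δ', hδ', hl', rfl⟩ := hmemN hy
        simp only [] at he ⊢
        have hδδ : δ = δ' := by
          have h1 := T.proj_ht ((good r hr).hA δ hδ).1.le
          have h2 := T.proj_ht ((good r' hr').hA δ' hδ').1.le
          rw [← h1, ← h2, he]
        subst hδδ
        have hMM : MC r = MC r' := (good r hr).cross h (good r' hr') hδ hl hl' he
        rw [hMM]
  · -- co-functional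
    rintro x hx y hy he
    rcases hx with hx | hx
    · rcases hy with hy | hy
      · exact h.cofn x hx y hy he
      · obtain ⟨r, hr, δ, hδ, hl, rfl⟩ := hmemN hy
        exact absurd he ((good r hr).k2 h hδ hl hx)
    · obtain ⟨r, hr, δ, hδ, hl, rfl⟩ := hmemN hx
      rcases hy with hy | hy
      · exact absurd he.symm ((good r hr).k2 h hδ hl hy)
      · obtain ⟨r', hr', δ', hδ', hl', rfl⟩ := hmemN hy
        simp only [] at he ⊢
        have hδδ : δ = δ' := by
          have h1 := U.proj_ht ((good r hr).hA δ hδ).2.le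
          have h2 := U.proj_ht ((good r' hr').hA δ' hδ').2.le
          rw [← h1, ← h2, he]
        subst hδδ
        have hMM : MC r = MC r' := (good r hr).crossImg h (good r' hr') hδ hl hl' he
        rw [hMM]
  · -- countable domain
    have hNc : N.Countable := by
      have hsub2 : N ⊆ ⋃ r ∈ W, ⋃ δ ∈ A,
          {(T.proj (Z (MC r)).1 δ, U.proj (Z (MC r)).2 δ)} := by
        rintro x ⟨r, hr, δ, hδ, hl, rfl⟩
        exact Set.mem_biUnion hr (Set.mem_biUnion hδ rfl)
      exact Set.Countable.mono hsub2 (h.cW.biUnion fun r _ =>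
        h.cA.biUnion fun δ _ => Set.countable_singleton _)
    have hsub3 : dom' (W ∪ N) ⊆ dom' W ∪ Prod.fst '' N := by
      rintro x ⟨y, hy | hy⟩
      · exact Or.inl ⟨y, hy⟩
      · exact Or.inr ⟨(x, y), hy, rfl⟩
    exact Set.Countable.mono hsub3 (h.cdom.union (hNc.image _))
  · -- heights in A
    rintro x (hx | hx)
    · exact h.htmem x hx
    · obtain ⟨r, hr, δ, hδ, hl, rfl⟩ := hmemN hx
      simpa [T.proj_ht ((good r hr).hA δ hδ).1.le] using hδ
  · -- downward closure
    rintro x (hx | hx) z hz hzA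
    · obtain ⟨y, hy⟩ := h.dcl x hx z hz hzA
      exact ⟨y, Or.inl hy⟩
    · obtain ⟨r, hr, δ, hδ, hl, rfl⟩ := hmemN hx
      have G := good r hr
      have hzlt : T.lt z (Z (MC r)).1 := T.lt_of_lt_of_le hz (T.proj_le (G.hA δ hδ).1.le)
      have hze : T.proj (Z (MC r)).1 (T.ht z) = z := T.proj_eq_of (Or.inl hzlt) rfl
      by_cases hlz : T.ht z ∈ lvl T (MC r)
      · obtain ⟨m, hm, hme⟩ := hlz
        have hzm : z = m.1 := by rw [← hze, ← hme, G.k3a hm]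
        exact ⟨m.2, Or.inl (by rw [hzm]; exact sub r hr hm)⟩
      · refine ⟨U.proj (Z (MC r)).2 (T.ht z), Or.inr ⟨r, hr, T.ht z, hzA, hlz, ?_⟩⟩
        rw [hze]
  · -- upward extension
    rintro x (hx | hx) b hb hlt
    · have G := good x hx
      by_cases hbl : b ∈ lvl T (MC x)
      · obtain ⟨m, hm, hme⟩ := hbl
        refine ⟨m, Or.inl (sub x hx hm), hme, ?_⟩
        have hne : x ≠ m := by
          intro he
          rw [he, hme] at hlt
          exact lt_irrefl _ hlt
        rcases G.max.1 (hMC x hx).2 hm hne with h' | h'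
        · exact h'.2.2
        · exact absurd (hme ▸ T.ht_lt_ht_of_lt h'.2.2) (asymm hlt)
      · refine ⟨(T.proj (Z (MC x)).1 b, U.proj (Z (MC x)).2 b),
          Or.inr ⟨x, hx, b, hb, hbl, rfl⟩, T.proj_ht (G.hA b hb).1.le, ?_⟩
        exact T.lt_proj (Or.inl (G.ub x (hMC x hx).2).1) hlt (G.hA b hb).1.le
    · obtain ⟨r, hr, δ, hδ, hl, rfl⟩ := hmemN hx
      have G := good r hr
      have hδb : δ < b := by
        rw [← T.proj_ht (G.hA δ hδ).1.le]
        exact hlt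
      by_cases hbl : b ∈ lvl T (MC r)
      · obtain ⟨m, hm, hme⟩ := hbl
        refine ⟨m, Or.inl (sub r hr hm), hme, ?_⟩
        exact T.lt_of_le_of_ht_lt (T.proj_le (G.hA δ hδ).1.le) (Or.inl (G.ub m hm).1)
          (by rw [T.proj_ht (G.hA δ hδ).1.le, hme]; exact hδb)
      · refine ⟨(T.proj (Z (MC r)).1 b, U.proj (Z (MC r)).2 b),
          Or.inr ⟨r, hr, b, hb, hbl, rfl⟩, T.proj_ht (G.hA b hb).1.le, ?_⟩
        exact T.proj_lt_proj hδb (G.hA b hb).1.le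
  · -- heights match
    rintro x (hx | hx)
    · exact h.htEq x hx
    · obtain ⟨r, hr, δ, hδ, hl, rfl⟩ := hmemN hx
      have G := good r hr
      simp only []
      rw [T.proj_ht (G.hA δ hδ).1.le, U.proj_ht (G.hA δ hδ).2.le]
  · -- order preserving
    rintro x hx y hy hlt
    rcases hy with hy | hy
    · rcases hx with hx | hx
      · exact h.mono x hx y hy hlt
      · obtain ⟨r, hr, δ, hδ, hl, rfl⟩ := hmemN hx
        have G := good r hr
        have hδy : δ < T.ht y.1 := by
          rw [← T.proj_ht (G.hA δ hδ).1.le]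
          exact T.ht_lt_ht_of_lt hlt
        have hp := h.pairMem hy hδ hδy.le
        have hpe : T.proj y.1 δ = T.proj (Z (MC r)).1 δ :=
          T.proj_eq_of (Or.inl hlt) (T.proj_ht (G.hA δ hδ).1.le)
        exact absurd hpe (G.k1 h hδ hl hp)
    · obtain ⟨r', hr', δ', hδ', hl', rfl⟩ := hmemN hy
      have G' := good r' hr'
      rcases hx with hx | hx
      · have hxlt : T.lt x.1 (Z (MC r')).1 :=
          T.lt_of_lt_of_le hlt (T.proj_le (G'.hA δ' hδ').1.le)
        have hxe : T.proj (Z (MC r')).1 (T.ht x.1) = x.1 := T.proj_eq_of (Or.inl hxlt) rfl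
        have hxδ : T.ht x.1 < δ' := by
          rw [← T.proj_ht (G'.hA δ' hδ').1.le]
          exact T.ht_lt_ht_of_lt hlt
        by_cases hlz : T.ht x.1 ∈ lvl T (MC r')
        · obtain ⟨m, hm, hme⟩ := hlz
          have hmW : m ∈ W := sub r' hr' hm
          have hxm : x.1 = m.1 := by rw [← hxe, ← hme, G'.k3a hm]
          have hx2 : x.2 = m.2 := h.fn x hx m hmW hxm
          rw [hx2]
          exact U.lt_proj (Or.inl (G'.ub m hm).2)
            (by rw [h.htEq m hmW, ← hxm]; exact hxδ) (G'.hA δ' hδ').2.le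
        · exact absurd hxe.symm (G'.k1 h (h.htmem x hx) hlz hx)
      · obtain ⟨r, hr, δ, hδ, hl, rfl⟩ := hmemN hx
        have G := good r hr
        have hδδ : δ < δ' := by
          rw [← T.proj_ht (G.hA δ hδ).1.le, ← T.proj_ht (G'.hA δ' hδ').1.le]
          exact T.ht_lt_ht_of_lt hlt
        have he : T.proj (Z (MC r)).1 δ = T.proj (Z (MC r')).1 δ := by
          have h1 : T.proj (T.proj (Z (MC r')).1 δ') δ = T.proj (Z (MC r')).1 δ :=
            T.proj_proj hδδ.le (G'.hA δ' hδ').1.le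
          rw [← h1]
          exact (T.proj_eq_of (Or.inl hlt) (T.proj_ht (G.hA δ hδ).1.le)).symm
        by_cases hlzδ : δ ∈ lvl T (MC r')
        · obtain ⟨m, hm, hme⟩ := hlzδ
          have hmW : m ∈ W := sub r' hr' hm
          have hme2 : m.1 = T.proj (Z (MC r)).1 δ := by
            rw [he, ← hme, G'.k3a hm]
          exact absurd hme2 (G.k1 h hδ hl hmW)
        · have hMM : MC r = MC r' := G.cross h G' hδ hl hlzδ he
          simp only []
          rw [hMM]
          exact U.proj_lt_proj hδδ (G'.hA δ' hδ').2.le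

end ExtendMain

theorem statement_17 (hCH : CH) {α β : Type u} (T : STree α) (U : STree β)
    (hT : NiceTree T) (hU : NiceTree U)
    (p q : PPair α β) (hp : IsCond T U p) (hq : IsCond T U q)
    (γ ξ : Ordinal) (hγξ : γ < ξ) (hγ : γ ∈ p.A) (hξ : ξ ∈ q.A)
    (hAsub : ∀ a ∈ p.A, a < ξ)
    (hrestr : restrC T p γ = restrC T q ξ)
    (hinjp : InjOn' T p γ) (hinjq : InjOn' T q ξ)
    (hincT : ∀ r ∈ p.F, T.ht r.1 = γ → ∀ s ∈ q.F, T.ht s.1 = ξ →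
      ¬ T.le r.1 s.1 ∧ ¬ T.le s.1 r.1)
    (hincU : ∀ r ∈ p.F, U.ht r.2 = γ → ∀ s ∈ q.F, U.ht s.2 = ξ →
      ¬ U.le r.2 s.2 ∧ ¬ U.le s.2 r.2) :
    ∃ w : PPair α β, IsCond T U w ∧ CondLe w p ∧ CondLe w q := by
  classical
  obtain ⟨p1, p2, p3, p4, p5, p6, p7, p8, p9, p10⟩ := hp
  obtain ⟨q1, q2, q3, q4, q5, q6, q7, q8, q9, q10⟩ := hq
  have Prep : Pre T U p.A p.F := ⟨p1, p2, p3, p4, p5, p6, p7, p9, p10⟩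
  have Preq : Pre T U q.A q.F := ⟨q1, q2, q3, q4, q5, q6, q7, q9, q10⟩
  have hA : p.A ∩ Set.Iio γ = q.A ∩ Set.Iio ξ := congrArg PPair.A hrestr
  have hF : {r ∈ p.F | T.ht r.1 < γ} = {r ∈ q.F | T.ht r.1 < ξ} := congrArg PPair.F hrestr
  have FsubG : ∀ r ∈ p.F, T.ht r.1 < γ → r ∈ q.F := by
    intro r hr hlt
    have : r ∈ {r ∈ q.F | T.ht r.1 < ξ} := hF ▸ (⟨hr, hlt⟩ : r ∈ {r ∈ p.F | T.ht r.1 < γ})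
    exact this.1
  have GsubF : ∀ s ∈ q.F, T.ht s.1 < ξ → s ∈ p.F := by
    intro s hs hlt
    have : s ∈ {r ∈ p.F | T.ht r.1 < γ} := hF ▸ (⟨hs, hlt⟩ : s ∈ {r ∈ q.F | T.ht r.1 < ξ})
    exact this.1
  have AmB : ∀ δ ∈ p.A, δ ∉ q.A → γ ≤ δ ∧ δ < ξ := by
    intro δ hδ hδq
    refine ⟨?_, hAsub δ hδ⟩
    by_contra hlt
    push_neg at hlt
    have : δ ∈ q.A ∩ Set.Iio ξ := hA ▸ (⟨hδ, hlt⟩ : δ ∈ p.A ∩ Set.Iio γ)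
    exact hδq this.1
  have BmIio : ∀ δ ∈ q.A, δ < ξ → δ < γ ∧ δ ∈ p.A := by
    intro δ hδ hlt
    have : δ ∈ p.A ∩ Set.Iio γ := hA.symm ▸ (⟨hδ, hlt⟩ : δ ∈ q.A ∩ Set.Iio ξ)
    exact ⟨this.2, this.1⟩
  have Gup : ∀ s ∈ q.F, γ ≤ T.ht s.1 → ξ ≤ T.ht s.1 := by
    intro s hs hge
    by_contra hlt
    push_neg at hlt
    exact absurd (BmIio _ (q6 s hs) hlt).1 (not_lt.2 hge)
  -- incomparability, upgraded to projections
  have IncT' : ∀ r ∈ p.F, γ ≤ T.ht r.1 → ∀ s ∈ q.F, ξ ≤ T.ht s.1 →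
      ¬ T.le r.1 (T.proj s.1 ξ) := by
    intro r hr hrγ s hs hsξ hle
    have hr0 := Prep.pairMem hr hγ hrγ
    have hs0 := Preq.pairMem hs hξ hsξ
    have := hincT _ hr0 (T.proj_ht hrγ) _ hs0 (T.proj_ht hsξ)
    exact this.1 (T.le_trans (T.proj_le hrγ) hle)
  have IncU' : ∀ r ∈ p.F, γ ≤ T.ht r.1 → ∀ s ∈ q.F, ξ ≤ T.ht s.1 →
      ¬ U.le r.2 (U.proj s.2 ξ) := by
    intro r hr hrγ s hs hsξ hle
    have hrγ2 : γ ≤ U.ht r.2 := by rw [p9 r hr]; exact hrγ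
    have hsξ2 : ξ ≤ U.ht s.2 := by rw [q9 s hs]; exact hsξ
    have hr0 := Prep.pairMem hr hγ hrγ
    have hs0 := Preq.pairMem hs hξ hsξ
    have := hincU _ hr0 (U.proj_ht hrγ2) _ hs0 (U.proj_ht hsξ2)
    exact this.1 (U.le_trans (U.proj_le hrγ2) hle)
  have negT : ∀ r ∈ p.F, γ ≤ T.ht r.1 → ∀ s ∈ q.F, ξ ≤ T.ht s.1 →
      ∀ δ, δ ≤ ξ → ¬ T.le r.1 (T.proj s.1 δ) := by
    intro r hr hrγ s hs hsξ δ hδξ hle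
    exact IncT' r hr hrγ s hs hsξ (T.le_trans hle (T.proj_le_proj hδξ hsξ))
  have negU : ∀ r ∈ p.F, γ ≤ T.ht r.1 → ∀ s ∈ q.F, ξ ≤ T.ht s.1 →
      ∀ δ, δ ≤ ξ → ¬ U.le r.2 (U.proj s.2 δ) := by
    intro r hr hrγ s hs hsξ δ hδξ hle
    have hsξ2 : ξ ≤ U.ht s.2 := by rw [q9 s hs]; exact hsξ
    exact IncU' r hr hrγ s hs hsξ (U.le_trans hle (U.proj_le_proj hδξ hsξ2))
  -- separation from injectivity on ξ
  have Sep : ∀ s ∈ q.F, ξ ≤ T.ht s.1 → ∀ s' ∈ q.F, ξ ≤ T.ht s'.1 →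
      ∀ δ, γ ≤ δ → δ < ξ → T.proj s.1 δ = T.proj s'.1 δ →
      T.proj s.1 ξ = T.proj s'.1 ξ := by
    intro s hs hsξ s' hs' hsξ' δ hγδ hδξ he
    by_contra hne
    have ht0 := Preq.pairMem hs hξ hsξ
    have ht0' := Preq.pairMem hs' hξ hsξ'
    obtain ⟨γ', hγ'B, hγ'ξ, hsep⟩ := hinjq _ ht0 _ ht0'
      (T.proj_ht hsξ) (T.proj_ht hsξ') hne
    have hγ'γ : γ' < γ := (BmIio γ' hγ'B hγ'ξ).1
    refine hsep (T.proj s.1 γ') (T.proj s'.1 γ')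
      (T.proj_le_proj (le_of_lt hγ'ξ) hsξ) (T.proj_ht ((le_of_lt hγ'ξ).trans hsξ))
      (T.proj_le_proj (le_of_lt hγ'ξ) hsξ') (T.proj_ht ((le_of_lt hγ'ξ).trans hsξ')) ?_
    have e1 : T.proj (T.proj s.1 δ) γ' = T.proj s.1 γ' :=
      T.proj_proj (hγ'γ.le.trans hγδ) (hδξ.le.trans hsξ)
    have e2 : T.proj (T.proj s'.1 δ) γ' = T.proj s'.1 γ' :=
      T.proj_proj (hγ'γ.le.trans hγδ) (hδξ.le.trans hsξ')
    rw [← e1, ← e2, he]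
  have SepImg : ∀ s ∈ q.F, ξ ≤ T.ht s.1 → ∀ s' ∈ q.F, ξ ≤ T.ht s'.1 →
      T.proj s.1 ξ = T.proj s'.1 ξ → U.proj s.2 ξ = U.proj s'.2 ξ := by
    intro s hs hsξ s' hs' hsξ' he
    exact q3 _ (Preq.pairMem hs hξ hsξ) _ (Preq.pairMem hs' hξ hsξ') he
  have SepRev : ∀ s ∈ q.F, ξ ≤ T.ht s.1 → ∀ s' ∈ q.F, ξ ≤ T.ht s'.1 →
      ∀ δ, γ ≤ δ → δ < ξ → U.proj s.2 δ = U.proj s'.2 δ →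
      T.proj s.1 ξ = T.proj s'.1 ξ := by
    intro s hs hsξ s' hs' hsξ' δ hγδ hδξ he
    by_contra hne
    have ht0 := Preq.pairMem hs hξ hsξ
    have ht0' := Preq.pairMem hs' hξ hsξ'
    obtain ⟨γ', hγ'B, hγ'ξ, hsep⟩ := hinjq _ ht0 _ ht0'
      (T.proj_ht hsξ) (T.proj_ht hsξ') hne
    have hγ'γ : γ' < γ := (BmIio γ' hγ'B hγ'ξ).1
    have hsξ2 : ξ ≤ U.ht s.2 := by rw [q9 s hs]; exact hsξ
    have hsξ2' : ξ ≤ U.ht s'.2 := by rw [q9 s' hs']; exact hsξ'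
    refine hsep (T.proj s.1 γ') (T.proj s'.1 γ')
      (T.proj_le_proj (le_of_lt hγ'ξ) hsξ) (T.proj_ht ((le_of_lt hγ'ξ).trans hsξ))
      (T.proj_le_proj (le_of_lt hγ'ξ) hsξ') (T.proj_ht ((le_of_lt hγ'ξ).trans hsξ')) ?_
    have hz := Preq.pairMem hs hγ'B ((le_of_lt hγ'ξ).trans hsξ)
    have hw := Preq.pairMem hs' hγ'B ((le_of_lt hγ'ξ).trans hsξ')
    refine q4 _ hz _ hw ?_
    have e1 : U.proj (U.proj s.2 δ) γ' = U.proj s.2 γ' :=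
      U.proj_proj (hγ'γ.le.trans hγδ) (hδξ.le.trans hsξ2)
    have e2 : U.proj (U.proj s'.2 δ) γ' = U.proj s'.2 γ' :=
      U.proj_proj (hγ'γ.le.trans hγδ) (hδξ.le.trans hsξ2')
    simp only []
    rw [← e1, ← e2, he]
  -- the intermediate set of pairs
  set N2 : Set (α × β) := {x | ∃ s ∈ q.F, ξ ≤ T.ht s.1 ∧ ∃ δ, δ ∈ p.A ∧ δ ∉ q.A ∧
    x = (T.proj s.1 δ, U.proj s.2 δ)} with hN2def
  set H : Set (α × β) := p.F ∪ q.F ∪ N2 with hHdef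
  have decomp : ∀ x ∈ H, x ∈ p.F ∨ (x ∈ q.F ∧ ξ ≤ T.ht x.1) ∨
      (∃ s ∈ q.F, ξ ≤ T.ht s.1 ∧ ∃ δ, δ ∈ p.A ∧ δ ∉ q.A ∧ γ ≤ δ ∧ δ < ξ ∧
        δ ≤ T.ht s.1 ∧ x = (T.proj s.1 δ, U.proj s.2 δ)) := by
    rintro x ((hx | hx) | hx)
    · exact Or.inl hx
    · by_cases hxξ : T.ht x.1 < ξ
      · exact Or.inl (GsubF x hx hxξ)
      · exact Or.inr (Or.inl ⟨hx, not_lt.1 hxξ⟩)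
    · obtain ⟨s, hs, hsξ, δ, hδA, hδB, rfl⟩ := hx
      obtain ⟨h1, h2⟩ := AmB δ hδA hδB
      exact Or.inr (Or.inr ⟨s, hs, hsξ, δ, hδA, hδB, h1, h2, h2.le.trans hsξ, rfl⟩)
  have hFH : p.F ⊆ H := fun x hx => Or.inl (Or.inl hx)
  have hGH : q.F ⊆ H := fun x hx => Or.inl (Or.inr hx)
  -- H is a pre-condition over p.A ∪ q.A
  have PreH : Pre T U (p.A ∪ q.A) H := by
    constructor
    · exact p1.union q1
    · exact Set.union_subset p2 q2
    · -- functional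
      intro x hx y hy he
      rcases decomp x hx with hx' | ⟨hx', hxξ⟩ | ⟨s, hs, hsξ, δ, hδA, hδB, hγδ, hδξ, hδh, rfl⟩
      · rcases decomp y hy with hy' | ⟨hy', hyξ⟩ | ⟨s', hs', hsξ', δ', hδA', hδB', hγδ', hδξ', hδh', rfl⟩
        · exact p3 x hx' y hy' he
        · exact absurd (hyξ.trans_eq (congrArg T.ht he).symm) (not_le.2 (hAsub _ (p6 x hx')))
        · -- x ∈ p.F, y new
          have hhx : T.ht x.1 = δ' := by rw [he]; exact T.proj_ht hδh'
          exact absurd (Or.inr he : T.le x.1 (T.proj s'.1 δ'))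
            (negT x hx' (hhx ▸ hγδ') s' hs' hsξ' δ' hδξ'.le)
      · rcases decomp y hy with hy' | ⟨hy', hyξ⟩ | ⟨s', hs', hsξ', δ', hδA', hδB', hγδ', hδξ', hδh', rfl⟩
        · exact absurd (hxξ.trans_eq (congrArg T.ht he)) (not_le.2 (hAsub _ (p6 y hy')))
        · exact q3 x hx' y hy' he
        · have hh : T.ht x.1 = δ' := by rw [he]; exact T.proj_ht hδh'
          exact absurd (hxξ.trans_eq hh) (not_le.2 hδξ')
      · rcases decomp y hy with hy' | ⟨hy', hyξ⟩ | ⟨s', hs', hsξ', δ', hδA', hδB', hγδ', hδξ', hδh', rfl⟩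
        · have hhy : T.ht y.1 = δ := by rw [← he]; exact T.proj_ht hδh
          exact absurd (Or.inr he.symm : T.le y.1 (T.proj s.1 δ))
            (negT y hy' (hhy ▸ hγδ) s hs hsξ δ hδξ.le)
        · have hh : T.ht y.1 = δ := by rw [← he]; exact T.proj_ht hδh
          exact absurd (hyξ.trans_eq hh) (not_le.2 hδξ)
        · simp only [] at he ⊢
          have hδδ : δ = δ' := by rw [← T.proj_ht hδh, ← T.proj_ht hδh', he]
          subst hδδ
          have h1 := SepImg s hs hsξ s' hs' hsξ' (Sep s hs hsξ s' hs' hsξ' δ hγδ hδξ he)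
          have hsξ2 : ξ ≤ U.ht s.2 := by rw [q9 s hs]; exact hsξ
          have hsξ2' : ξ ≤ U.ht s'.2 := by rw [q9 s' hs']; exact hsξ'
          rw [← U.proj_proj hδξ.le hsξ2, ← U.proj_proj hδξ.le hsξ2', h1]
    · -- co-functional
      intro x hx y hy he
      have hhtx : U.ht x.2 = T.ht x.1 := by
        rcases decomp x hx with h' | ⟨h', _⟩ | ⟨s, hs, hsξ, δ, _, _, _, hδξ, hδh, rfl⟩
        · exact p9 x h'
        · exact q9 x h'
        · have hsξ2 : δ ≤ U.ht s.2 := by rw [q9 s hs]; exact hδh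
          simp only []
          rw [U.proj_ht hsξ2, T.proj_ht hδh]
      have hhty : U.ht y.2 = T.ht y.1 := by
        rcases decomp y hy with h' | ⟨h', _⟩ | ⟨s, hs, hsξ, δ, _, _, _, hδξ, hδh, rfl⟩
        · exact p9 y h'
        · exact q9 y h'
        · have hsξ2 : δ ≤ U.ht s.2 := by rw [q9 s hs]; exact hδh
          simp only []
          rw [U.proj_ht hsξ2, T.proj_ht hδh]
      rcases decomp x hx with hx' | ⟨hx', hxξ⟩ | ⟨s, hs, hsξ, δ, hδA, hδB, hγδ, hδξ, hδh, rfl⟩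
      · rcases decomp y hy with hy' | ⟨hy', hyξ⟩ | ⟨s', hs', hsξ', δ', hδA', hδB', hγδ', hδξ', hδh', rfl⟩
        · exact p4 x hx' y hy' he
        · have hh : T.ht x.1 = T.ht y.1 := by rw [← hhtx, ← hhty, he]
          exact absurd (hyξ.trans_eq hh.symm) (not_le.2 (hAsub _ (p6 x hx')))
        · have hsξ2' : δ' ≤ U.ht s'.2 := by rw [q9 s' hs']; exact hδh'
          have hhx2 : γ ≤ T.ht x.1 := by
            rw [← hhtx, he]
            simp only []
            rw [U.proj_ht hsξ2']
            exact hγδ'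
          exact absurd (Or.inr he : U.le x.2 (U.proj s'.2 δ'))
            (negU x hx' hhx2 s' hs' hsξ' δ' hδξ'.le)
      · rcases decomp y hy with hy' | ⟨hy', hyξ⟩ | ⟨s', hs', hsξ', δ', hδA', hδB', hγδ', hδξ', hδh', rfl⟩
        · have hh : T.ht x.1 = T.ht y.1 := by rw [← hhtx, ← hhty, he]
          exact absurd (hxξ.trans_eq hh) (not_le.2 (hAsub _ (p6 y hy')))
        · exact q4 x hx' y hy' he
        · -- x ∈ q.F high, y new : heights differ
          have hsξ2' : δ' ≤ U.ht s'.2 := by rw [q9 s' hs']; exact hδh'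
          have : T.ht x.1 = δ' := by rw [← hhtx, he]; exact U.proj_ht hsξ2'
          exact absurd (this ▸ hxξ) (not_le.2 hδξ')
      · rcases decomp y hy with hy' | ⟨hy', hyξ⟩ | ⟨s', hs', hsξ', δ', hδA', hδB', hγδ', hδξ', hδh', rfl⟩
        · have hsξ2 : δ ≤ U.ht s.2 := by rw [q9 s hs]; exact hδh
          have hhy2 : γ ≤ T.ht y.1 := by
            rw [← hhty, ← he]
            simp only []
            rw [U.proj_ht hsξ2]
            exact hγδ
          exact absurd (Or.inr he.symm : U.le y.2 (U.proj s.2 δ))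
            (negU y hy' hhy2 s hs hsξ δ hδξ.le)
        · have hsξ2 : δ ≤ U.ht s.2 := by rw [q9 s hs]; exact hδh
          have : T.ht y.1 = δ := by rw [← hhty, ← he]; exact U.proj_ht hsξ2
          exact absurd (this ▸ hyξ) (not_le.2 hδξ)
        · simp only [] at he ⊢
          have hsξ2 : ξ ≤ U.ht s.2 := by rw [q9 s hs]; exact hsξ
          have hsξ2' : ξ ≤ U.ht s'.2 := by rw [q9 s' hs']; exact hsξ'
          have hδδ : δ = δ' := by
            rw [← U.proj_ht (hδξ.le.trans hsξ2), ← U.proj_ht (hδξ'.le.trans hsξ2'), he]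
          subst hδδ
          have h1 := SepRev s hs hsξ s' hs' hsξ' δ hγδ hδξ he
          rw [← T.proj_proj hδξ.le hsξ, ← T.proj_proj hδξ.le hsξ', h1]
    · -- countable domain
      have hN2c : N2.Countable := by
        have hsub2 : N2 ⊆ ⋃ s ∈ q.F, ⋃ δ ∈ p.A,
            {(T.proj s.1 δ, U.proj s.2 δ)} := by
          rintro x ⟨s, hs, hsξ, δ, hδA, hδB, rfl⟩
          exact Set.mem_biUnion hs (Set.mem_biUnion hδA rfl)
        exact Set.Countable.mono hsub2 (Preq.cW.biUnion fun s _ =>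
          p1.biUnion fun δ _ => Set.countable_singleton _)
      have hsub3 : dom' H ⊆ dom' p.F ∪ dom' q.F ∪ Prod.fst '' N2 := by
        rintro x ⟨y, (hy | hy) | hy⟩
        · exact Or.inl (Or.inl ⟨y, hy⟩)
        · exact Or.inl (Or.inr ⟨y, hy⟩)
        · exact Or.inr ⟨(x, y), hy, rfl⟩
      exact Set.Countable.mono hsub3 ((p5.union q5).union (hN2c.image _))
    · -- heights in union
      intro x hx
      rcases decomp x hx with hx' | ⟨hx', _⟩ | ⟨s, hs, hsξ, δ, hδA, _, _, _, hδh, rfl⟩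
      · exact Or.inl (p6 x hx')
      · exact Or.inr (q6 x hx')
      · exact Or.inl (by simpa [T.proj_ht hδh] using hδA)
    · -- downward closure
      intro x hx z hz hzA
      rcases decomp x hx with hx' | ⟨hx', hxξ⟩ | ⟨s, hs, hsξ, δ, hδA, hδB, hγδ, hδξ, hδh, rfl⟩
      · have hzA' : T.ht z ∈ p.A := by
          rcases hzA with h' | h'
          · exact h'
          · have : T.ht z < ξ := (T.ht_lt_ht_of_lt hz).trans (hAsub _ (p6 x hx'))
            exact (BmIio _ h' this).2
        obtain ⟨y, hy⟩ := p7 x hx' z hz hzA'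
        exact ⟨y, hFH hy⟩
      · by_cases hzB : T.ht z ∈ q.A
        · obtain ⟨y, hy⟩ := q7 x hx' z hz hzB
          exact ⟨y, hGH hy⟩
        · have hzA' : T.ht z ∈ p.A := hzA.resolve_right hzB
          have hze : T.proj x.1 (T.ht z) = z := T.proj_eq_of (Or.inl hz) rfl
          exact ⟨U.proj x.2 (T.ht z), Or.inr ⟨x, hx', hxξ, T.ht z, hzA', hzB, by rw [hze]⟩⟩
      · have hzs : T.lt z s.1 := T.lt_of_lt_of_le hz (T.proj_le hδh)
        have hze : T.proj s.1 (T.ht z) = z := T.proj_eq_of (Or.inl hzs) rfl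
        by_cases hzB : T.ht z ∈ q.A
        · obtain ⟨y, hy⟩ := q7 s hs z hzs hzB
          exact ⟨y, hGH hy⟩
        · have hzA' : T.ht z ∈ p.A := hzA.resolve_right hzB
          exact ⟨U.proj s.2 (T.ht z), Or.inr ⟨s, hs, hsξ, T.ht z, hzA', hzB, by rw [hze]⟩⟩
    · -- heights match
      intro x hx
      rcases decomp x hx with hx' | ⟨hx', _⟩ | ⟨s, hs, hsξ, δ, _, _, _, _, hδh, rfl⟩
      · exact p9 x hx'
      · exact q9 x hx'
      · have hδh2 : δ ≤ U.ht s.2 := by rw [q9 s hs]; exact hδh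
        simp only []
        rw [U.proj_ht hδh2, T.proj_ht hδh]
    · -- order preserving
      intro x hx y hy hlt
      rcases decomp y hy with hy' | ⟨hy', hyξ⟩ | ⟨s', hs', hsξ', δ', hδA', hδB', hγδ', hδξ', hδh', rfl⟩
      · -- y ∈ p.F
        rcases decomp x hx with hx' | ⟨hx', hxξ⟩ | ⟨s, hs, hsξ, δ, hδA, hδB, hγδ, hδξ, hδh, rfl⟩
        · exact p10 x hx' y hy' hlt
        · exact absurd ((T.ht_lt_ht_of_lt hlt).trans (hAsub _ (p6 y hy'))) (not_lt.2 hxξ)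
        · -- new pair below a p.F pair : impossible
          have hδy : δ < T.ht y.1 := by
            rw [← T.proj_ht hδh]
            exact T.ht_lt_ht_of_lt hlt
          have hw := Prep.pairMem hy' hδA hδy.le
          have hpe : T.proj y.1 δ = T.proj s.1 δ := T.proj_eq_of (Or.inl hlt) (T.proj_ht hδh)
          exact absurd (Or.inr hpe : T.le (T.proj y.1 δ) (T.proj s.1 δ))
            (negT _ hw (by rw [T.proj_ht hδy.le]; exact hγδ) s hs hsξ δ hδξ.le)
      · -- y ∈ q.F with ht ≥ ξ
        rcases decomp x hx with hx' | ⟨hx', hxξ⟩ | ⟨s, hs, hsξ, δ, hδA, hδB, hγδ, hδξ, hδh, rfl⟩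
        · by_cases hxγ : T.ht x.1 < γ
          · exact q10 x (FsubG x hx' hxγ) y hy' hlt
          · have hxγ' : γ ≤ T.ht x.1 := not_lt.1 hxγ
            have hxξ2 : T.ht x.1 < ξ := hAsub _ (p6 x hx')
            exact absurd (Or.inl (T.lt_proj (Or.inl hlt) hxξ2 hyξ) :
              T.le x.1 (T.proj y.1 ξ)) (IncT' x hx' hxγ' y hy' hyξ)
        · exact q10 x hx' y hy' hlt
        · -- new pair below a high q.F pair
          have hpe : T.proj s.1 δ = T.proj y.1 δ :=
            (T.proj_eq_of (Or.inl hlt) (T.proj_ht hδh)).symm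
          have h1 := SepImg s hs hsξ y hy' hyξ (Sep s hs hsξ y hy' hyξ δ hγδ hδξ hpe)
          have hsξ2 : ξ ≤ U.ht s.2 := by rw [q9 s hs]; exact hsξ
          have hyξ2 : ξ ≤ U.ht y.2 := by rw [q9 y hy']; exact hyξ
          have h2 : U.proj s.2 δ = U.proj y.2 δ := by
            rw [← U.proj_proj hδξ.le hsξ2, ← U.proj_proj hδξ.le hyξ2, h1]
          simp only []
          rw [h2]
          exact U.proj_lt (hδξ.trans_le hyξ2)
      · -- y is a new pair
        rcases decomp x hx with hx' | ⟨hx', hxξ⟩ | ⟨s, hs, hsξ, δ, hδA, hδB, hγδ, hδξ, hδh, rfl⟩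
        · by_cases hxγ : T.ht x.1 < γ
          · -- x is in the common part, below s'
            have hxq : x ∈ q.F := FsubG x hx' hxγ
            have hxs : T.lt x.1 s'.1 := T.lt_of_lt_of_le hlt (T.proj_le hδh')
            have h2 := q10 x hxq s' hs' hxs
            have hxδ : U.ht x.2 < δ' := by
              rw [q9 x hxq, ← T.proj_ht hδh']
              exact T.ht_lt_ht_of_lt hlt
            have hδh2' : δ' ≤ U.ht s'.2 := by rw [q9 s' hs']; exact hδh'
            exact U.lt_proj (Or.inl h2) hxδ hδh2'
          · exact absurd (Or.inl hlt : T.le x.1 (T.proj s'.1 δ'))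
              (negT x hx' (not_lt.1 hxγ) s' hs' hsξ' δ' hδξ'.le)
        · have : T.ht x.1 < δ' := by
            rw [← T.proj_ht hδh']
            exact T.ht_lt_ht_of_lt hlt
          exact absurd (hxξ.trans_lt (this.trans hδξ')) (lt_irrefl _)
        · -- new pair below new pair
          have hδδ : δ < δ' := by
            rw [← T.proj_ht hδh, ← T.proj_ht hδh']
            exact T.ht_lt_ht_of_lt hlt
          have hpe : T.proj s.1 δ = T.proj s'.1 δ := by
            have e1 : T.proj (T.proj s'.1 δ') δ = T.proj s'.1 δ :=
              T.proj_proj hδδ.le hδh'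
            rw [← e1]
            exact (T.proj_eq_of (Or.inl hlt) (T.proj_ht hδh)).symm
          have h1 := SepImg s hs hsξ s' hs' hsξ' (Sep s hs hsξ s' hs' hsξ' δ hγδ hδξ hpe)
          have hsξ2 : ξ ≤ U.ht s.2 := by rw [q9 s hs]; exact hsξ
          have hsξ2' : ξ ≤ U.ht s'.2 := by rw [q9 s' hs']; exact hsξ'
          have h2 : U.proj s.2 δ = U.proj s'.2 δ := by
            rw [← U.proj_proj hδξ.le hsξ2, ← U.proj_proj hδξ.le hsξ2', h1]
          simp only []
          rw [h2]
          exact U.proj_lt_proj hδδ (hδξ'.le.trans hsξ2')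
  obtain ⟨W', hsub, hcond⟩ := pre_extend hT hU PreH
  exact ⟨⟨p.A ∪ q.A, W'⟩, hcond, ⟨Set.subset_union_left, fun x hx => hsub (hFH hx)⟩,
    ⟨Set.subset_union_right, fun x hx => hsub (hGH hx)⟩⟩
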